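/- The rational function r(x) = (5(864x-1)² + 6)/(12(864x-1)) is a solution of the Riccati equation with parameter λ = 121/144: for every real x with x ≠ 0, x ≠ 1/432 and x ≠ 1/864, one has r'(x) + r(x)²/((1-432x)x) - 60 = (121/144)·(1/((1-432x)x)). -/

import Mathlib

/-- The rational function `r(x) = (5(864x-1)^2 + 6)/(12(864x-1))` solves the Riccati equation
`r'(x) + C_x r(x)^2 - 60 = λ C_x` with `C_x = 1/((1-432x)x)` and `λ = 121/144`, for every real
`x ≠ 0`, `x ≠ 1/432`, `x ≠ 1/864`. -/
theorem riccati_solution_lambda_121_over_144 :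
    ∀ x : ℝ, x ≠ 0 → x ≠ 1 / 432 → x ≠ 1 / 864 →
      deriv (fun y : ℝ => (5 * (864 * y - 1) ^ 2 + 6) / (12 * (864 * y - 1))) x
        + ((5 * (864 * x - 1) ^ 2 + 6) / (12 * (864 * x - 1))) ^ 2 / ((1 - 432 * x) * x) - 60
      = (121 / 144) * (1 / ((1 - 432 * x) * x)) := by
  intro x hx0 hx432 hx864
  have hd : (12 : ℝ) * (864 * x - 1) ≠ 0 := by
    intro h
    apply hx864
    have : (864 : ℝ) * x - 1 = 0 := by linarith [mul_eq_zero.mp h |>.resolve_left (by norm_num)]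
    linarith
  have hnum : HasDerivAt (fun y : ℝ => 5 * (864 * y - 1) ^ 2 + 6)
      (5 * (2 * (864 * x - 1) * 864)) x := by
    have : HasDerivAt (fun y : ℝ => 864 * y - 1) 864 x := by
      simpa using ((hasDerivAt_id x).const_mul (864 : ℝ)).sub_const 1
    simpa using ((this.pow 2).const_mul (5 : ℝ)).add_const 6
  have hden : HasDerivAt (fun y : ℝ => 12 * (864 * y - 1)) (12 * 864) x := by
    have : HasDerivAt (fun y : ℝ => 864 * y - 1) 864 x := by
      simpa using ((hasDerivAt_id x).const_mul (864 : ℝ)).sub_const 1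
    simpa using this.const_mul (12 : ℝ)
  have hdiv : HasDerivAt (fun y : ℝ => (5 * (864 * y - 1) ^ 2 + 6) / (12 * (864 * y - 1))) _ x :=
    hnum.div hden hd
  rw [hdiv.deriv]
  have h1 : (1 : ℝ) - 432 * x ≠ 0 := fun h => hx432 (by linarith)
  have h2 : (864 : ℝ) * x - 1 ≠ 0 := fun h => hx864 (by linarith)
  have h3 : (1:ℝ) - x * 432 ≠ 0 := by intro h; apply h1; linarith
  field_simp
  ring
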